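/- Theorem 3, fixed-point verification in the linear-quadratic case: under the LQ setting, suppose P is a symmetric matrix solving the discrete-time algebraic Riccati equation P = q*_xx − q*_xu q*_uu⁻¹ q*_xuᵀ, and suppose the block matrix Q* is positive definite. Define q̂(x,u) = [x;u]ᵀ Q* [x;u] + γ·Tr(q*_xx Σ)/(1−γ). Then q̂ is a fixed point of the relaxed Bellman operator: for all (x,u) ∈ ℝⁿ × ℝᵐ, q̂(x,u) = [x;u]ᵀ L [x;u] + γ · inf_{w ∈ ℝᵐ} ∫ q̂(Ax + Bu + ξ, w) dμ(ξ), and the infimum is attained at w = −q*_uu⁻¹ q*_xuᵀ (Ax + Bu). -/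

import Mathlib

open Matrix MeasureTheory

lemma dp_tA {k l : ℕ} (M : Matrix (Fin k) (Fin l) ℝ) (x : Fin k → ℝ) (v : Fin l → ℝ) :
    x ⬝ᵥ M *ᵥ v = (Mᵀ *ᵥ x) ⬝ᵥ v := by
  rw [dotProduct_mulVec, ← vecMul_transpose, transpose_transpose]

lemma dp_tB {k l : ℕ} (M : Matrix (Fin k) (Fin l) ℝ) (x : Fin l → ℝ) (v : Fin k → ℝ) :
    (M *ᵥ x) ⬝ᵥ v = x ⬝ᵥ Mᵀ *ᵥ v := by
  rw [dp_tA, transpose_transpose]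

lemma blocks_dp {n m : ℕ} (A : Matrix (Fin n) (Fin n) ℝ) (B : Matrix (Fin n) (Fin m) ℝ)
    (C : Matrix (Fin m) (Fin n) ℝ) (D : Matrix (Fin m) (Fin m) ℝ)
    (x a : Fin n → ℝ) (y b : Fin m → ℝ) :
    Sum.elim x y ⬝ᵥ (fromBlocks A B C D) *ᵥ Sum.elim a b =
      x ⬝ᵥ A *ᵥ a + x ⬝ᵥ B *ᵥ b + y ⬝ᵥ C *ᵥ a + y ⬝ᵥ D *ᵥ b := by
  rw [fromBlocks_mulVec, sumElim_dotProduct_sumElim, dotProduct_add, dotProduct_add]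
  simp [Sum.elim_comp_inl, Sum.elim_comp_inr]
  ring

lemma integral_quad {n : ℕ} (μ : Measure (Fin n → ℝ)) [IsProbabilityMeasure μ]
    (Sig : Matrix (Fin n) (Fin n) ℝ)
    (hmean_int : ∀ i, Integrable (fun ξ => ξ i) μ)
    (hmean : ∀ i, ∫ ξ, ξ i ∂μ = 0)
    (hcov_int : ∀ i j, Integrable (fun ξ => ξ i * ξ j) μ)
    (hcov : ∀ i j, ∫ ξ, ξ i * ξ j ∂μ = Sig i j)
    (K : ℝ) (a : Fin n → ℝ) (M : Matrix (Fin n) (Fin n) ℝ) :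
    ∫ ξ, (K + a ⬝ᵥ ξ + ξ ⬝ᵥ M *ᵥ ξ) ∂μ = K + ∑ i, ∑ j, M i j * Sig i j := by
  have h2 : ∀ ξ : Fin n → ℝ, ξ ⬝ᵥ M *ᵥ ξ = ∑ i, ∑ j, M i j * (ξ i * ξ j) := by
    intro ξ
    simp only [dotProduct, mulVec, Finset.mul_sum]
    exact Finset.sum_congr rfl fun i _ => Finset.sum_congr rfl fun j _ => by ring
  have h1 : ∀ ξ : Fin n → ℝ, a ⬝ᵥ ξ = ∑ i, a i * ξ i := fun ξ => rfl
  have ha : Integrable (fun ξ : Fin n → ℝ => ∑ i, a i * ξ i) μ :=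
    integrable_finset_sum _ (fun i _ => (hmean_int i).const_mul (a i))
  have hq : Integrable (fun ξ : Fin n → ℝ => ∑ i, ∑ j, M i j * (ξ i * ξ j)) μ :=
    integrable_finset_sum _ fun i _ => integrable_finset_sum _ fun j _ =>
      (hcov_int i j).const_mul (M i j)
  simp only [h1, h2]
  have hKa : Integrable (fun ξ : Fin n → ℝ => K + ∑ i, a i * ξ i) μ := by
    exact (integrable_const K).add ha
  rw [integral_add hKa hq, integral_add (integrable_const K) ha]
  rw [integral_const, integral_finset_sum _ (fun i _ => (hmean_int i).const_mul (a i)),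
    integral_finset_sum _ (fun i _ => integrable_finset_sum _ fun j _ =>
      (hcov_int i j).const_mul (M i j))]
  simp only [integral_const_mul, hmean, mul_zero, Finset.sum_const_zero]
  have : ∀ i ∈ Finset.univ, (∫ ξ : Fin n → ℝ, ∑ j, M i j * (ξ i * ξ j) ∂μ)
      = ∑ j, M i j * Sig i j := by
    intro i _
    rw [integral_finset_sum _ (fun j _ => (hcov_int i j).const_mul (M i j))]
    simp only [integral_const_mul, hcov]
  rw [Finset.sum_congr rfl this]
  simp [measure_univ]

lemma quad_min {m : ℕ} (S : Matrix (Fin m) (Fin m) ℝ) (hS : S.PosDef)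
    (b : Fin m → ℝ) (C : ℝ) (g : (Fin m → ℝ) → ℝ)
    (hg : ∀ w, g w = C + 2 * (b ⬝ᵥ w) + w ⬝ᵥ S *ᵥ w) :
    (⨅ w, g w) = g (-(S⁻¹ *ᵥ b)) := by
  have hSsymm : Sᵀ = S := by
    have h := hS.1
    rw [Matrix.IsHermitian] at h
    ext i j
    conv_rhs => rw [← h]
    simp [conjTranspose_apply]
  set w0 : Fin m → ℝ := -(S⁻¹ *ᵥ b) with hw0
  have hSw0 : S *ᵥ w0 = -b := by
    rw [hw0, mulVec_neg, mulVec_mulVec, mul_nonsing_inv S hS.det_pos.ne'.isUnit, one_mulVec]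
  have hsym : ∀ v z : Fin m → ℝ, v ⬝ᵥ S *ᵥ z = z ⬝ᵥ S *ᵥ v := by
    intro v z
    rw [dp_tA, hSsymm, dotProduct_comm]
  have key : ∀ w, g w = (w - w0) ⬝ᵥ S *ᵥ (w - w0) + g w0 := by
    intro w
    rw [hg w, hg w0]
    rw [mulVec_sub, dotProduct_sub, sub_dotProduct, sub_dotProduct, hsym w0 w, hSw0]
    simp only [dotProduct_neg, neg_dotProduct, dotProduct_comm b w0, dotProduct_comm b w]
    ring
  have hnonneg : ∀ w, g w0 ≤ g w := by
    intro w
    rw [key w]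
    have h := hS.posSemidef.dotProduct_mulVec_nonneg (w - w0)
    rw [star_trivial] at h
    linarith
  refine le_antisymm (ciInf_le ⟨g w0, ?_⟩ w0) (le_ciInf hnonneg)
  rintro y ⟨w, rfl⟩
  exact hnonneg w

/-- Theorem 3, fixed-point verification in the linear-quadratic case: with `P`
solving the Riccati equation and `Q*` positive definite, the quadratic function
`q̂(x,u) = [x;u]ᵀ Q* [x;u] + γ Tr(q*_xx Σ)/(1−γ)` is a fixed point of the
relaxed Bellman operator, and the inner infimum is attained at
`w = −q*_uu⁻¹ q*_xuᵀ (Ax + Bu)`. -/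
theorem lq_fixed_point_verification
    {n m : ℕ} (γ : ℝ) (hγ : γ ∈ Set.Ioo (0 : ℝ) 1)
    (μ : Measure (Fin n → ℝ)) [IsProbabilityMeasure μ]
    (Sig : Matrix (Fin n) (Fin n) ℝ)
    (hmean_int : ∀ i, Integrable (fun ξ => ξ i) μ)
    (hmean : ∀ i, ∫ ξ, ξ i ∂μ = 0)
    (hcov_int : ∀ i j, Integrable (fun ξ => ξ i * ξ j) μ)
    (hcov : ∀ i j, ∫ ξ, ξ i * ξ j ∂μ = Sig i j)
    (A : Matrix (Fin n) (Fin n) ℝ) (B : Matrix (Fin n) (Fin m) ℝ)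
    (Lxx : Matrix (Fin n) (Fin n) ℝ) (Lxu : Matrix (Fin n) (Fin m) ℝ)
    (Luu : Matrix (Fin m) (Fin m) ℝ)
    (L : Matrix (Fin n ⊕ Fin m) (Fin n ⊕ Fin m) ℝ)
    (hL : L = Matrix.fromBlocks Lxx Lxu Lxuᵀ Luu) (hLsymm : L.IsSymm)
    (P : Matrix (Fin n) (Fin n) ℝ) (hPsymm : P.IsSymm)
    (qsxx : Matrix (Fin n) (Fin n) ℝ) (hqsxx : qsxx = Lxx + γ • (Aᵀ * P * A))
    (qsxu : Matrix (Fin n) (Fin m) ℝ) (hqsxu : qsxu = Lxu + γ • (Aᵀ * P * B))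
    (qsuu : Matrix (Fin m) (Fin m) ℝ) (hqsuu : qsuu = Luu + γ • (Bᵀ * P * B))
    (Qstar : Matrix (Fin n ⊕ Fin m) (Fin n ⊕ Fin m) ℝ)
    (hQstar : Qstar = Matrix.fromBlocks qsxx qsxu qsxuᵀ qsuu)
    (hQpd : Qstar.PosDef)
    -- `P` solves the discrete-time algebraic Riccati equation
    (hriccati : P = qsxx - qsxu * qsuu⁻¹ * qsxuᵀ)
    -- the candidate fixed point
    (qhat : (Fin n → ℝ) → (Fin m → ℝ) → ℝ)
    (hqhat : ∀ x u, qhat x u =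
      Sum.elim x u ⬝ᵥ Qstar *ᵥ Sum.elim x u + γ * (qsxx * Sig).trace / (1 - γ)) :
    ∀ (x : Fin n → ℝ) (u : Fin m → ℝ),
      qhat x u = Sum.elim x u ⬝ᵥ L *ᵥ Sum.elim x u +
        γ * ⨅ w : Fin m → ℝ, ∫ ξ, qhat (A *ᵥ x + B *ᵥ u + ξ) w ∂μ ∧
      (⨅ w : Fin m → ℝ, ∫ ξ, qhat (A *ᵥ x + B *ᵥ u + ξ) w ∂μ) =
        ∫ ξ, qhat (A *ᵥ x + B *ᵥ u + ξ)
          (-(qsuu⁻¹ * qsxuᵀ) *ᵥ (A *ᵥ x + B *ᵥ u)) ∂μ := by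
  intro x u
  obtain ⟨hγ0, hγ1⟩ := hγ
  have h1γ : (1:ℝ) - γ ≠ 0 := by linarith
  -- qsuu is positive definite
  have hqsuu_h : qsuuᴴ = qsuu := by
    have h := congrArg Matrix.toBlocks₂₂ hQpd.1
    rw [hQstar, fromBlocks_conjTranspose] at h
    simpa [Matrix.toBlocks_fromBlocks₂₂] using h
  have hqsuuPD : qsuu.PosDef := by
    refine .of_dotProduct_mulVec_pos hqsuu_h (fun w hw => ?_)
    have hz : Sum.elim (0 : Fin n → ℝ) w ≠ 0 := by
      intro h; apply hw; funext j; exact congrFun h (Sum.inr j)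
    have h := hQpd.dotProduct_mulVec_pos hz
    rw [star_trivial, hQstar, blocks_dp] at h
    rw [star_trivial]
    simpa using h
  -- expansion of qhat
  have hqhat' : ∀ (v : Fin n → ℝ) (w : Fin m → ℝ), qhat v w =
      v ⬝ᵥ qsxx *ᵥ v + 2 * (v ⬝ᵥ qsxu *ᵥ w) + w ⬝ᵥ qsuu *ᵥ w
        + γ * (qsxx * Sig).trace / (1 - γ) := by
    intro v w
    rw [hqhat, hQstar, blocks_dp, dp_tA qsxuᵀ w v, transpose_transpose,
      dotProduct_comm (qsxu *ᵥ w) v]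
    ring
  set y : Fin n → ℝ := A *ᵥ x + B *ᵥ u with hy
  -- the trace identity
  have htr : ∑ i, ∑ j, qsxx i j * Sig i j = (qsxx * Sig).trace := by
    have hSigsymm : ∀ i j, Sig i j = Sig j i := by
      intro i j
      rw [← hcov i j, ← hcov j i]
      simp [mul_comm]
    rw [Matrix.trace]
    simp only [Matrix.diag, Matrix.mul_apply]
    exact Finset.sum_congr rfl fun i _ => Finset.sum_congr rfl fun j _ => by
      rw [hSigsymm i j]
  -- the value of the inner integral
  have hInt : ∀ w : Fin m → ℝ, (∫ ξ, qhat (y + ξ) w ∂μ) =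
      (y ⬝ᵥ qsxx *ᵥ y + (qsxx * Sig).trace + γ * (qsxx * Sig).trace / (1 - γ))
        + 2 * ((qsxuᵀ *ᵥ y) ⬝ᵥ w) + w ⬝ᵥ qsuu *ᵥ w := by
    intro w
    have hpt : ∀ ξ : Fin n → ℝ, qhat (y + ξ) w =
        (y ⬝ᵥ qsxx *ᵥ y + 2 * ((qsxuᵀ *ᵥ y) ⬝ᵥ w) + w ⬝ᵥ qsuu *ᵥ w
          + γ * (qsxx * Sig).trace / (1 - γ))
        + (qsxxᵀ *ᵥ y + qsxx *ᵥ y + (2:ℝ) • (qsxu *ᵥ w)) ⬝ᵥ ξ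
        + ξ ⬝ᵥ qsxx *ᵥ ξ := by
      intro ξ
      rw [hqhat' (y + ξ) w]
      simp only [mulVec_add, dotProduct_add, add_dotProduct, smul_dotProduct, smul_eq_mul]
      rw [dp_tA qsxx y ξ, dotProduct_comm ξ (qsxx *ᵥ y), dotProduct_comm ξ (qsxu *ᵥ w),
        dp_tA qsxu y w]
      ring
    simp only [hpt]
    rw [integral_quad μ Sig hmean_int hmean hcov_int hcov, htr]
    ring
  -- minimization
  have hmin := quad_min qsuu hqsuuPD (qsxuᵀ *ᵥ y)
    (y ⬝ᵥ qsxx *ᵥ y + (qsxx * Sig).trace + γ * (qsxx * Sig).trace / (1 - γ))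
    (fun w => ∫ ξ, qhat (y + ξ) w ∂μ) hInt
  have hw0eq : -(qsuu⁻¹ * qsxuᵀ) *ᵥ y = -(qsuu⁻¹ *ᵥ (qsxuᵀ *ᵥ y)) := by
    rw [neg_mulVec, mulVec_mulVec]
  constructor
  · -- fixed point equation
    rw [hmin]
    -- value at the minimizer
    have hIw0 : (fun w => ∫ ξ, qhat (y + ξ) w ∂μ) (-(qsuu⁻¹ *ᵥ (qsxuᵀ *ᵥ y))) =
        y ⬝ᵥ P *ᵥ y + (qsxx * Sig).trace + γ * (qsxx * Sig).trace / (1 - γ) := by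
      beta_reduce
      rw [hInt]
      have hSw0 : qsuu *ᵥ (-(qsuu⁻¹ *ᵥ (qsxuᵀ *ᵥ y))) = -(qsxuᵀ *ᵥ y) := by
        rw [mulVec_neg, mulVec_mulVec, mul_nonsing_inv qsuu hqsuuPD.det_pos.ne'.isUnit,
          one_mulVec]
      rw [hSw0]
      have ht : (qsxuᵀ *ᵥ y) ⬝ᵥ (qsuu⁻¹ *ᵥ (qsxuᵀ *ᵥ y)) =
          y ⬝ᵥ (qsxu * qsuu⁻¹ * qsxuᵀ) *ᵥ y := by
        rw [← dp_tA qsxu y, mulVec_mulVec, mulVec_mulVec, Matrix.mul_assoc]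
      rw [dotProduct_neg, neg_dotProduct, dotProduct_neg, neg_neg,
        dotProduct_comm (qsuu⁻¹ *ᵥ (qsxuᵀ *ᵥ y)) (qsxuᵀ *ᵥ y), ht, hriccati,
        sub_mulVec, dotProduct_sub]
      ring
    rw [(by exact hIw0 : ∫ ξ, qhat (y + ξ) (-(qsuu⁻¹ *ᵥ (qsxuᵀ *ᵥ y))) ∂μ = _), hqhat x u, hQstar, hL, blocks_dp, blocks_dp, hy]
    simp only [hqsxx, hqsxu, hqsuu, transpose_add, transpose_smul, transpose_mul,
      transpose_transpose, hPsymm.eq, add_mulVec, smul_mulVec, dotProduct_smul,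
      smul_eq_mul, dotProduct_add, add_dotProduct, mulVec_add, dp_tB, mulVec_mulVec,
      Matrix.mul_assoc]
    field_simp
    ring
  · rw [hw0eq]
    exact hmin
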